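/- If S is an unextendible product basis in the tensor product of Hilbert spaces C^{d_1} ⊗ ... ⊗ C^{d_p}, then S has at least (d_1 - 1) + (d_2 - 1) + ... + (d_p - 1) + 1 elements. -/

import Mathlib

open scoped Classical

/-- The product (tensor) vector in `ℂ^{d₁} ⊗ ⋯ ⊗ ℂ^{d_p}`, realized as
`EuclideanSpace ℂ (Π j, Fin (d j))`, built from local vectors `f j`. -/
noncomputable def prodVec {p : ℕ} {d : Fin p → ℕ}
    (f : ∀ j, EuclideanSpace ℂ (Fin (d j))) :
    EuclideanSpace ℂ (∀ j, Fin (d j)) :=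
  WithLp.toLp 2 (fun x => ∏ j, f j (x j))

/-- A product state: a nonzero vector of the form `v₁ ⊗ ⋯ ⊗ v_p`. -/
def IsProductState {p : ℕ} {d : Fin p → ℕ}
    (v : EuclideanSpace ℂ (∀ j, Fin (d j))) : Prop :=
  v ≠ 0 ∧ ∃ f : ∀ j, EuclideanSpace ℂ (Fin (d j)), v = prodVec f

/-- An unextendible product basis: a finite set of mutually orthogonal product
states such that every product state orthogonal to all of them is zero
(equivalently, no product state is orthogonal to all of them). -/
def IsUPB {p : ℕ} {d : Fin p → ℕ}
    (S : Finset (EuclideanSpace ℂ (∀ j, Fin (d j)))) : Prop :=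
  (∀ v ∈ S, IsProductState v) ∧
  (∀ v ∈ S, ∀ w ∈ S, v ≠ w → (inner ℂ v w : ℂ) = 0) ∧
  ∀ z : EuclideanSpace ℂ (∀ j, Fin (d j)),
    IsProductState z → ¬ (∀ v ∈ S, (inner ℂ v z : ℂ) = 0)

lemma inner_prodVec {p : ℕ} {d : Fin p → ℕ}
    (f g : ∀ j, EuclideanSpace ℂ (Fin (d j))) :
    (inner ℂ (prodVec f) (prodVec g) : ℂ) = ∏ j, (inner ℂ (f j) (g j) : ℂ) := by
  rw [PiLp.inner_apply]
  simp only [RCLike.inner_apply', prodVec]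
  have : ∀ j : Fin p, (∑ i : Fin (d j), (starRingEnd ℂ) (f j i) * g j i)
      = (inner ℂ (f j) (g j) : ℂ) := by
    intro j; rw [PiLp.inner_apply]; simp only [RCLike.inner_apply']
  simp only [← this]
  rw [Finset.prod_univ_sum, Fintype.piFinset_univ]
  refine Finset.sum_congr rfl fun x _ => ?_
  rw [map_prod, Finset.prod_mul_distrib]

lemma prodVec_ne_zero {p : ℕ} {d : Fin p → ℕ}
    {f : ∀ j, EuclideanSpace ℂ (Fin (d j))} (hf : ∀ j, f j ≠ 0) :
    prodVec f ≠ 0 := by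
  have hx : ∀ j, ∃ i, f j i ≠ 0 := by
    intro j
    by_contra h
    push_neg at h
    exact hf j (PiLp.ext h)
  choose x hx using hx
  intro h
  have : prodVec f x = 0 := by rw [h]; rfl
  rw [prodVec, WithLp.ofLp_toLp] at this
  exact (Finset.prod_ne_zero_iff.mpr fun j _ => hx j) this

lemma exists_fiber_card_le {α : Type*} {ι : Type*} [Fintype ι] [Nonempty ι]
    (n : ι → ℕ) (s : Finset α) (hs : s.card ≤ ∑ j, n j) :
    ∃ g : α → ι, ∀ j, (s.filter (fun a => g a = j)).card ≤ n j := by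
  classical
  induction s using Finset.induction_on with
  | empty => exact ⟨fun _ => Classical.arbitrary ι, fun j => by simp⟩
  | insert _ _ ha =>
    rename_i a s ih
    rw [Finset.card_insert_of_notMem ha] at hs
    obtain ⟨g, hg⟩ := ih (le_trans (Nat.le_succ _) hs)
    have hsum : s.card = ∑ j, (s.filter (fun a => g a = j)).card :=
      Finset.card_eq_sum_card_fiberwise (fun x _ => Finset.mem_univ (g x))
    have hlt : ∃ j0, (s.filter (fun a => g a = j0)).card < n j0 := by
      by_contra h
      push_neg at h
      have : (∑ j, n j) ≤ s.card := by
        rw [hsum]; exact Finset.sum_le_sum fun j _ => h j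
      omega
    obtain ⟨j0, hj0⟩ := hlt
    refine ⟨Function.update g a j0, fun j => ?_⟩
    have hfil : ∀ t : Finset α, a ∉ t →
        t.filter (fun x => Function.update g a j0 x = j) = t.filter (fun x => g x = j) := by
      intro t hat
      refine Finset.filter_congr fun x hx => ?_
      rw [Function.update_of_ne (ne_of_mem_of_not_mem hx hat)]
    rw [Finset.filter_insert, hfil s ha]
    by_cases hj : j0 = j
    · subst hj
      rw [if_pos (Function.update_self a j0 g)]
      rw [Finset.card_insert_of_notMem (fun h => ha (Finset.mem_of_mem_filter a h))]
      omega
    · rw [if_neg (by simpa [Function.update_self] using hj)]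
      exact hg j

theorem stmt0 {p : ℕ} (d : Fin p → ℕ) (hd : ∀ j, 1 ≤ d j)
    (S : Finset (EuclideanSpace ℂ (∀ j, Fin (d j)))) (hS : IsUPB S) :
    (∑ j, (d j - 1)) + 1 ≤ S.card := by
  by_contra h
  push_neg at h
  have hcard : S.card ≤ ∑ j, (d j - 1) := by omega
  -- choose product decompositions
  have hFex : ∀ v : EuclideanSpace ℂ (∀ j, Fin (d j)),
      ∃ f, v ∈ S → v = prodVec f := by
    intro v
    by_cases hv : v ∈ S
    · obtain ⟨f, hf⟩ := (hS.1 v hv).2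
      exact ⟨f, fun _ => hf⟩
    · exact ⟨fun j => 0, fun hv' => absurd hv' hv⟩
  choose F hF using hFex
  -- case p = 0
  rcases Nat.eq_zero_or_pos p with hp | hp
  · subst hp
    have hSempty : S = ∅ := by
      simpa using hcard
    refine hS.2.2 (prodVec fun j => Fin.elim0 j) ⟨prodVec_ne_zero (fun j => j.elim0), _, rfl⟩ ?_
    intro v hv
    simp [hSempty] at hv
  · have : Nonempty (Fin p) := ⟨⟨0, hp⟩⟩
    obtain ⟨g, hg⟩ := exists_fiber_card_le (fun j => d j - 1) S hcard
    -- for each j, find z j orthogonal to the j-th factors of group j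
    have hz : ∀ j : Fin p, ∃ z : EuclideanSpace ℂ (Fin (d j)), z ≠ 0 ∧
        ∀ v ∈ S.filter (fun a => g a = j), (inner ℂ (F v j) z : ℂ) = 0 := by
      intro j
      set T := S.filter (fun a => g a = j) with hT
      set K : Submodule ℂ (EuclideanSpace ℂ (Fin (d j))) :=
        Submodule.span ℂ ((T.image (fun v => F v j)) : Set (EuclideanSpace ℂ (Fin (d j)))) with hK
      have hrank : Module.finrank ℂ K < d j := by
        have h1 : Module.finrank ℂ K ≤ (T.image (fun v => F v j)).card :=
          finrank_span_finset_le_card _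
        have h2 : (T.image (fun v => F v j)).card ≤ T.card := Finset.card_image_le
        have h3 : T.card ≤ d j - 1 := by rw [hT]; convert hg j using 3
        have := hd j
        omega
      have hKne : Kᗮ ≠ ⊥ := by
        intro hbot
        rw [Submodule.orthogonal_eq_bot_iff] at hbot
        rw [hbot] at hrank
        rw [finrank_top] at hrank
        simp [finrank_euclideanSpace] at hrank
      obtain ⟨z, hzK, hz0⟩ := Submodule.exists_mem_ne_zero_of_ne_bot hKne
      refine ⟨z, hz0, fun v hv => ?_⟩
      exact (Submodule.mem_orthogonal K z).mp hzK (F v j)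
        (Submodule.subset_span (by
          simp only [Finset.coe_image, Set.mem_image]
          exact ⟨v, by simpa [hT] using hv, rfl⟩))
    choose z hz0 hzorth using hz
    refine hS.2.2 (prodVec z) ⟨prodVec_ne_zero hz0, z, rfl⟩ ?_
    intro v hv
    rw [hF v hv, inner_prodVec]
    refine Finset.prod_eq_zero (Finset.mem_univ (g v)) ?_
    exact hzorth (g v) v (Finset.mem_filter.mpr ⟨hv, rfl⟩)
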